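/- The number of tubes of the fan graph F_{1,n} (the pterahedron's underlying graph) is n(n+1)/2 + 2^n − 1. -/

import Mathlib

/-- The fan graph `F_{m,n}`: the join of the edgeless graph on `m` nodes with the
path graph on `n` nodes.  `F_{1,n}` is the suspension of the path graph `P_n`. -/
def fanGraph (m n : ℕ) : SimpleGraph (Fin m ⊕ Fin n) :=
  SimpleGraph.fromRel fun x y =>
    match x, y with
    | Sum.inl _, Sum.inr _ => True
    | Sum.inr i, Sum.inr j => (i : ℕ) + 1 = (j : ℕ)
    | _, _ => False

/-- A tube of a graph: a nonempty proper subset of vertices inducing a connected subgraph. -/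
def IsTube {V : Type*} (G : SimpleGraph V) (s : Set V) : Prop :=
  s.Nonempty ∧ s ≠ Set.univ ∧ (G.induce s).Connected

/-- The number of tubes of `F_{1,n}` (the graph underlying the pterahedron) is
`n(n+1)/2 + 2^n − 1`. -/
lemma fan_adj_apex {n : ℕ} (j : Fin n) : (fanGraph 1 n).Adj (Sum.inl 0) (Sum.inr j) :=
  ⟨by simp, Or.inl trivial⟩

lemma fan_adj_inr {n : ℕ} {i j : Fin n} :
    (fanGraph 1 n).Adj (Sum.inr i) (Sum.inr j) ↔ ((i:ℕ)+1 = j ∨ (j:ℕ)+1 = i) := by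
  constructor
  · rintro ⟨hne, h | h⟩
    · exact Or.inl h
    · exact Or.inr h
  · intro h
    refine ⟨fun he => ?_, h⟩
    cases he; omega

lemma mem_no_apex {n : ℕ} {s : Set (Fin 1 ⊕ Fin n)} (hs : Sum.inl 0 ∉ s)
    {x : Fin 1 ⊕ Fin n} (hx : x ∈ s) : ∃ i : Fin n, x = Sum.inr i := by
  cases x with
  | inl a =>
    have : a = 0 := Subsingleton.elim _ _
    subst this; exact absurd hx hs
  | inr i => exact ⟨i, rfl⟩

lemma connected_of_apex_mem {n : ℕ} {s : Set (Fin 1 ⊕ Fin n)} (hs : Sum.inl 0 ∈ s) :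
    ((fanGraph 1 n).induce s).Connected := by
  rw [SimpleGraph.connected_iff]
  have key : ∀ x : ↥s, ((fanGraph 1 n).induce s).Reachable x ⟨Sum.inl 0, hs⟩ := by
    rintro ⟨x, hx⟩
    cases x with
    | inl a =>
      have : a = 0 := Subsingleton.elim _ _
      subst this; rfl
    | inr j =>
      exact SimpleGraph.Adj.reachable ((fan_adj_apex j).symm)
  exact ⟨fun x y => (key x).trans (key y).symm, ⟨⟨_, hs⟩⟩⟩

lemma walk_interval {n : ℕ} {s : Set (Fin 1 ⊕ Fin n)} (hs : Sum.inl 0 ∉ s)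
    {x y : ↥s} (w : ((fanGraph 1 n).induce s).Walk x y) :
    ∀ {i j : Fin n}, x.val = Sum.inr i → y.val = Sum.inr j →
      ∀ c : Fin n, min (i:ℕ) (j:ℕ) ≤ (c:ℕ) → (c:ℕ) ≤ max (i:ℕ) (j:ℕ) → Sum.inr c ∈ s := by
  induction w with
  | @nil u =>
    intro i j hx hy c h1 h2
    rw [hx] at hy
    injection hy with hij
    subst hij
    have : c = i := Fin.ext (by omega)
    subst this
    exact hx ▸ u.2
  | @cons u v z h p ih =>
    intro i j hx hy c h1 h2
    obtain ⟨i', hv⟩ := mem_no_apex hs v.2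
    have hadj : (fanGraph 1 n).Adj u.val v.val := h
    rw [hx, hv] at hadj
    have hstep : (i:ℕ)+1 = i' ∨ (i':ℕ)+1 = i := fan_adj_inr.mp hadj
    by_cases hc : (c:ℕ) = i
    · have : c = i := Fin.ext hc
      subst this
      exact hx ▸ u.2
    · exact ih hv hy c (by omega) (by omega)

lemma tube_of_Icc {n : ℕ} (a b : Fin n) (hab : a ≤ b) :
    IsTube (fanGraph 1 n) (Sum.inr '' Set.Icc a b) := by
  set s : Set (Fin 1 ⊕ Fin n) := Sum.inr '' Set.Icc a b with hsdef
  have hmem : ∀ {c : Fin n}, Sum.inr c ∈ s ↔ a ≤ c ∧ c ≤ b := by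
    intro c
    constructor
    · rintro ⟨d, hd, he⟩
      injection he with h; exact h ▸ hd
    · intro h; exact ⟨c, h, rfl⟩
  have ha : Sum.inr a ∈ s := hmem.mpr ⟨le_refl _, hab⟩
  have hb : Sum.inr b ∈ s := hmem.mpr ⟨hab, le_refl _⟩
  have hnoapex : Sum.inl (0 : Fin 1) ∉ s := by
    rintro ⟨d, _, he⟩; exact Sum.inr_ne_inl he
  refine ⟨⟨_, ha⟩, fun hu => hnoapex (hu ▸ Set.mem_univ _), ?_⟩
  rw [SimpleGraph.connected_iff]
  refine ⟨?_, ⟨⟨_, ha⟩⟩⟩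
  have reach : ∀ d : ℕ, ∀ i j : Fin n, ∀ hi : Sum.inr i ∈ s, ∀ hj : Sum.inr j ∈ s,
      (j:ℕ) = i + d →
      ((fanGraph 1 n).induce s).Reachable ⟨Sum.inr i, hi⟩ ⟨Sum.inr j, hj⟩ := by
    intro d
    induction d with
    | zero =>
      intro i j hi hj hd
      have : i = j := Fin.ext (by omega)
      subst this; rfl
    | succ d ih =>
      intro i j hi hj hd
      have hlt : (i:ℕ) + 1 < n := by have := j.isLt; omega
      set i' : Fin n := ⟨(i:ℕ)+1, hlt⟩ with hi'def
      have hi'mem : Sum.inr i' ∈ s := by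
        have h1 := hmem.mp hi
        have h2 := hmem.mp hj
        refine hmem.mpr ⟨?_, ?_⟩
        · exact le_trans h1.1 (by simp only [Fin.le_def, hi'def, Fin.val_mk]; omega)
        · have : (i':ℕ) ≤ (j:ℕ) := by simp only [hi'def, Fin.val_mk]; omega
          exact le_trans (by exact this) h2.2
      have hadj : ((fanGraph 1 n).induce s).Adj ⟨Sum.inr i, hi⟩ ⟨Sum.inr i', hi'mem⟩ := by
        exact fan_adj_inr.mpr (Or.inl rfl)
      exact (hadj.reachable).trans (ih i' j hi'mem hj (by simp only [hi'def, Fin.val_mk]; omega))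
  rintro ⟨x, hx⟩ ⟨y, hy⟩
  obtain ⟨i, rfl⟩ := mem_no_apex hnoapex hx
  obtain ⟨j, rfl⟩ := mem_no_apex hnoapex hy
  rcases le_or_gt (i:ℕ) (j:ℕ) with h | h
  · exact reach ((j:ℕ) - i) i j hx hy (by omega)
  · exact (reach ((i:ℕ) - j) j i hy hx (by omega)).symm

lemma tube_no_apex {n : ℕ} {s : Set (Fin 1 ⊕ Fin n)} (h : IsTube (fanGraph 1 n) s)
    (hs : Sum.inl 0 ∉ s) : ∃ a b : Fin n, a ≤ b ∧ s = Sum.inr '' Set.Icc a b := by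
  classical
  obtain ⟨hne, _, hconn⟩ := h
  have ivl : ∀ i j c : Fin n, Sum.inr i ∈ s → Sum.inr j ∈ s →
      min (i:ℕ) (j:ℕ) ≤ (c:ℕ) → (c:ℕ) ≤ max (i:ℕ) (j:ℕ) → Sum.inr c ∈ s := by
    intro i j c hi hj h1 h2
    exact (hconn ⟨_, hi⟩ ⟨_, hj⟩).elim fun w => walk_interval hs w rfl rfl c h1 h2
  set t : Finset (Fin n) := Finset.univ.filter (fun i => Sum.inr i ∈ s) with htdef
  have htne : t.Nonempty := by
    obtain ⟨x, hx⟩ := hne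
    obtain ⟨i, rfl⟩ := mem_no_apex hs hx
    exact ⟨i, by simp [htdef, hx]⟩
  have hmemt : ∀ {i : Fin n}, i ∈ t ↔ Sum.inr i ∈ s := by
    intro i; simp [htdef]
  refine ⟨t.min' htne, t.max' htne, ?_, ?_⟩
  · exact Finset.min'_le _ _ (t.max'_mem htne)
  · ext x
    constructor
    · intro hx
      obtain ⟨i, rfl⟩ := mem_no_apex hs hx
      exact ⟨i, ⟨Finset.min'_le _ _ (hmemt.mpr hx), Finset.le_max' _ _ (hmemt.mpr hx)⟩, rfl⟩
    · rintro ⟨c, ⟨h1, h2⟩, rfl⟩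
      refine ivl _ _ c (hmemt.mp (t.min'_mem htne)) (hmemt.mp (t.max'_mem htne)) ?_ ?_
      · exact le_trans (min_le_left _ _) h1
      · exact le_trans h2 (le_max_right _ _)

lemma Icc_inj {n : ℕ} {a b a' b' : Fin n} (hab : a ≤ b) (hab' : a' ≤ b')
    (h : (Sum.inr '' Set.Icc a b : Set (Fin 1 ⊕ Fin n)) = Sum.inr '' Set.Icc a' b') :
    a = a' ∧ b = b' := by
  have hIcc : Set.Icc a b = Set.Icc a' b' :=
    Set.image_injective.mpr Sum.inr_injective h
  have h1 : a ∈ Set.Icc a' b' := hIcc ▸ Set.mem_Icc.mpr ⟨le_refl _, hab⟩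
  have h2 : a' ∈ Set.Icc a b := hIcc.symm ▸ Set.mem_Icc.mpr ⟨le_refl _, hab'⟩
  have h3 : b ∈ Set.Icc a' b' := hIcc ▸ Set.mem_Icc.mpr ⟨hab, le_refl _⟩
  have h4 : b' ∈ Set.Icc a b := hIcc.symm ▸ Set.mem_Icc.mpr ⟨hab', le_refl _⟩
  exact ⟨le_antisymm h2.1 h1.1, le_antisymm h3.2 h4.2⟩

lemma tubeApexIff {n : ℕ} (s : Set (Fin 1 ⊕ Fin n)) :
    (IsTube (fanGraph 1 n) s ∧ Sum.inl 0 ∈ s) ↔ (Sum.inl 0 ∈ s ∧ s ≠ Set.univ) := by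
  constructor
  · rintro ⟨⟨_, hne, _⟩, hmem⟩; exact ⟨hmem, hne⟩
  · rintro ⟨hmem, hne⟩
    exact ⟨⟨⟨_, hmem⟩, hne, connected_of_apex_mem hmem⟩, hmem⟩

def equivA (n : ℕ) :
    {s : Set (Fin 1 ⊕ Fin n) // Sum.inl 0 ∈ s ∧ s ≠ Set.univ} ≃
      {t : Set (Fin n) // t ≠ Set.univ} where
  toFun s := ⟨Sum.inr ⁻¹' s.1, by
    obtain ⟨hmem, hne⟩ := s.2
    intro h
    apply hne
    ext x
    simp only [Set.mem_univ, iff_true]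
    cases x with
    | inl a =>
      have : a = 0 := Subsingleton.elim _ _
      subst this; exact hmem
    | inr j => exact h.ge (Set.mem_univ j)⟩
  invFun t := ⟨insert (Sum.inl 0) (Sum.inr '' t.1), Set.mem_insert _ _, by
    intro h
    apply t.2
    ext j
    simp only [Set.mem_univ, iff_true]
    have hj : Sum.inr j ∈ insert (Sum.inl (0:Fin 1)) (Sum.inr '' t.1) := h ▸ Set.mem_univ _
    rcases hj with h' | ⟨i, hi, he⟩
    · exact absurd h' (by simp)
    · injection he with he; exact he ▸ hi⟩
  left_inv s := by
    apply Subtype.ext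
    obtain ⟨hmem, _⟩ := s.2
    ext x
    cases x with
    | inl a =>
      have : a = 0 := Subsingleton.elim _ _
      subst this
      simp [hmem]
    | inr j => simp
  right_inv t := by
    apply Subtype.ext
    ext j
    simp

lemma cardNeUniv (n : ℕ) :
    Nat.card {t : Set (Fin n) // t ≠ Set.univ} = 2 ^ n - 1 := by
  classical
  rw [Nat.card_eq_fintype_card, Fintype.card_subtype_compl, Fintype.card_subtype_eq,
    Fintype.card_set, Fintype.card_fin]

lemma cardPairs (n : ℕ) :
    Nat.card {p : Fin n × Fin n // p.1 ≤ p.2} = n * (n + 1) / 2 := by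
  classical
  rw [Nat.card_eq_fintype_card, Fintype.card_subtype, Finset.card_filter,
    Fintype.sum_prod_type]
  have hinner : ∀ i : Fin n, (∑ j : Fin n, if (i, j).1 ≤ (i, j).2 then 1 else 0) = n - (i:ℕ) := by
    intro i
    rw [Finset.sum_boole]
    norm_cast
    rw [show Finset.univ.filter (fun j => (i, j).1 ≤ (i, j).2) = Finset.Ici i by
      ext j; simp]
    exact Fin.card_Ici i
  rw [Finset.sum_congr rfl (fun i _ => hinner i)]
  rw [Fin.sum_univ_eq_sum_range (fun i => n - i)]
  have h2 : ∑ i ∈ Finset.range n, (n - i) = ∑ i ∈ Finset.range (n+1), (n - i) := by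
    rw [Finset.sum_range_succ]; simp
  rw [h2]
  have h3 : ∑ i ∈ Finset.range (n+1), (n - i) = ∑ i ∈ Finset.range (n+1), i := by
    simpa using Finset.sum_range_reflect (fun j => j) (n+1)
  rw [h3, Finset.sum_range_id]
  simp [Nat.mul_comm]

lemma equivB (n : ℕ) :
    Nat.card {s : Set (Fin 1 ⊕ Fin n) // IsTube (fanGraph 1 n) s ∧ Sum.inl 0 ∉ s} =
      Nat.card {p : Fin n × Fin n // p.1 ≤ p.2} := by
  refine Nat.card_congr (Equiv.ofBijective
    (fun p : {p : Fin n × Fin n // p.1 ≤ p.2} =>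
      (⟨Sum.inr '' Set.Icc p.1.1 p.1.2, tube_of_Icc _ _ p.2, by
        rintro ⟨d, _, he⟩; exact Sum.inr_ne_inl he⟩ :
        {s : Set (Fin 1 ⊕ Fin n) // IsTube (fanGraph 1 n) s ∧ Sum.inl 0 ∉ s}))
    ⟨?_, ?_⟩).symm
  · intro p q h
    have h' := Icc_inj p.2 q.2 (congrArg Subtype.val h)
    exact Subtype.ext (Prod.ext h'.1 h'.2)
  · rintro ⟨s, hts, hna⟩
    obtain ⟨a, b, hab, rfl⟩ := tube_no_apex hts hna
    exact ⟨⟨(a, b), hab⟩, Subtype.ext rfl⟩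

theorem card_tubes_fanGraph_one (n : ℕ) :
    Nat.card {s : Set (Fin 1 ⊕ Fin n) // IsTube (fanGraph 1 n) s} =
      n * (n + 1) / 2 + 2 ^ n - 1 := by
  classical
  have h1 : 1 ≤ 2 ^ n := Nat.one_le_two_pow
  rw [← Nat.card_congr (Equiv.sumCompl
    (fun s : {s : Set (Fin 1 ⊕ Fin n) // IsTube (fanGraph 1 n) s} => Sum.inl 0 ∈ s.1)),
    Nat.card_sum]
  have hA : Nat.card {x : {s : Set (Fin 1 ⊕ Fin n) // IsTube (fanGraph 1 n) s} //
      Sum.inl 0 ∈ x.1} = 2 ^ n - 1 := by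
    have e : {x : {s : Set (Fin 1 ⊕ Fin n) // IsTube (fanGraph 1 n) s} // Sum.inl 0 ∈ x.1} ≃
        {t : Set (Fin n) // t ≠ Set.univ} :=
      (Equiv.subtypeSubtypeEquivSubtypeInter (IsTube (fanGraph 1 n)) (fun s => Sum.inl 0 ∈ s)).trans
        ((Equiv.subtypeEquivRight (fun s => tubeApexIff s)).trans (equivA n))
    rw [Nat.card_congr e]
    exact cardNeUniv n
  have hB : Nat.card {x : {s : Set (Fin 1 ⊕ Fin n) // IsTube (fanGraph 1 n) s} //
      ¬ Sum.inl 0 ∈ x.1} = n * (n + 1) / 2 := by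
    have e : {x : {s : Set (Fin 1 ⊕ Fin n) // IsTube (fanGraph 1 n) s} // ¬ Sum.inl 0 ∈ x.1} ≃
        {s : Set (Fin 1 ⊕ Fin n) // IsTube (fanGraph 1 n) s ∧ Sum.inl 0 ∉ s} :=
      Equiv.subtypeSubtypeEquivSubtypeInter (IsTube (fanGraph 1 n)) (fun s => Sum.inl 0 ∉ s)
    rw [Nat.card_congr e, equivB n]
    exact cardPairs n
  rw [hA, hB]
  omega
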